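/- Let n ≥ 1 and let M be a Hausdorff topological space with closed subsets P and Q such that M = P ∪ Q. Suppose there are homeomorphisms h₁ : P → ℝⁿ⁻¹ × [0,∞) and h₂ : Q → ℝⁿ⁻¹ × [0,∞) such that h₁(P ∩ Q) = ℝⁿ⁻¹ × {0} and h₂(P ∩ Q) = ℝⁿ⁻¹ × {0}. Then M is homeomorphic to ℝⁿ. -/

import Mathlib

open Set

private lemma continuous_of_closedCover {α β : Type*} [TopologicalSpace α] [TopologicalSpace β]
    {f : α → β} {P Q : Set α} (hP : IsClosed P) (hQ : IsClosed Q) (hcov : P ∪ Q = univ)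
    (h1 : ContinuousOn f P) (h2 : ContinuousOn f Q) : Continuous f := by
  rw [continuous_iff_isClosed]
  intro C hC
  have hpre : f ⁻¹' C = (P ∩ f ⁻¹' C) ∪ (Q ∩ f ⁻¹' C) := by
    rw [← union_inter_distrib_right, hcov, univ_inter]
  rw [hpre]
  exact (h1.preimage_isClosed_of_isClosed hP hC).union (h2.preimage_isClosed_of_isClosed hQ hC)

/-- **Gluing two closed half-spaces along their boundaries gives Euclidean space.**
Let `n ≥ 1` and let `M` be a Hausdorff space with closed subsets `P` and `Q` such that
`M = P ∪ Q`. Suppose there are homeomorphisms `h₁ : P ≃ₜ ℝⁿ⁻¹ × [0,∞)` and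
`h₂ : Q ≃ₜ ℝⁿ⁻¹ × [0,∞)` with `h₁(P ∩ Q) = ℝⁿ⁻¹ × {0}` and `h₂(P ∩ Q) = ℝⁿ⁻¹ × {0}`.
Then `M` is homeomorphic to `ℝⁿ`. -/
theorem glue_halfspaces (n : ℕ) (hn : 1 ≤ n)
    (M : Type) [TopologicalSpace M] [T2Space M]
    (P Q : Set M) (hP : IsClosed P) (hQ : IsClosed Q) (hPQ : P ∪ Q = Set.univ)
    (h₁ : ↥P ≃ₜ EuclideanSpace ℝ (Fin (n - 1)) × Set.Ici (0 : ℝ))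
    (h₂ : ↥Q ≃ₜ EuclideanSpace ℝ (Fin (n - 1)) × Set.Ici (0 : ℝ))
    (hb₁ : h₁ '' {x : P | (x : M) ∈ Q} = {y | (y.2 : ℝ) = 0})
    (hb₂ : h₂ '' {x : Q | (x : M) ∈ P} = {y | (y.2 : ℝ) = 0}) :
    Nonempty (M ≃ₜ EuclideanSpace ℝ (Fin n)) := by
  classical
  set E := EuclideanSpace ℝ (Fin (n - 1)) with hE
  set z0 : Set.Ici (0 : ℝ) := ⟨0, Set.self_mem_Ici⟩ with hz0
  -- membership characterizations
  have mem₁ : ∀ x : P, ((h₁ x).2 : ℝ) = 0 ↔ (x : M) ∈ Q := by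
    intro x
    constructor
    · intro h
      have : h₁ x ∈ h₁ '' {x : P | (x : M) ∈ Q} := by rw [hb₁]; exact h
      obtain ⟨y, hy, hyx⟩ := this
      have : y = x := h₁.injective hyx
      rwa [this] at hy
    · intro h
      have : h₁ x ∈ h₁ '' {x : P | (x : M) ∈ Q} := ⟨x, h, rfl⟩
      rwa [hb₁] at this
  have mem₂ : ∀ x : Q, ((h₂ x).2 : ℝ) = 0 ↔ (x : M) ∈ P := by
    intro x
    constructor
    · intro h
      have : h₂ x ∈ h₂ '' {x : Q | (x : M) ∈ P} := by rw [hb₂]; exact h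
      obtain ⟨y, hy, hyx⟩ := this
      have : y = x := h₂.injective hyx
      rwa [this] at hy
    · intro h
      have : h₂ x ∈ h₂ '' {x : Q | (x : M) ∈ P} := ⟨x, h, rfl⟩
      rwa [hb₂] at this
  have memQ : ∀ x : M, x ∉ P → x ∈ Q := by
    intro x hx
    have : x ∈ P ∪ Q := hPQ ▸ Set.mem_univ x
    exact this.resolve_left hx
  -- transition maps on the boundary
  have mP : ∀ a : E, (↑(h₂.symm (a, z0)) : M) ∈ P := by
    intro a
    apply (mem₂ _).1
    rw [h₂.apply_symm_apply]
  have mQ : ∀ a : E, (↑(h₁.symm (a, z0)) : M) ∈ Q := by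
    intro a
    apply (mem₁ _).1
    rw [h₁.apply_symm_apply]
  set g : E → E := fun a => (h₁ ⟨↑(h₂.symm (a, z0)), mP a⟩).1 with hg
  set g' : E → E := fun a => (h₂ ⟨↑(h₁.symm (a, z0)), mQ a⟩).1 with hg'
  have hgc : Continuous g := by
    apply continuous_fst.comp (h₁.continuous.comp _)
    exact Continuous.subtype_mk
      (continuous_subtype_val.comp (h₂.symm.continuous.comp
        (continuous_id.prodMk continuous_const))) _
  have hg'c : Continuous g' := by
    apply continuous_fst.comp (h₂.continuous.comp _)
    exact Continuous.subtype_mk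
      (continuous_subtype_val.comp (h₁.symm.continuous.comp
        (continuous_id.prodMk continuous_const))) _
  -- g' ∘ g = id
  have hg'g : ∀ a : E, g' (g a) = a := by
    intro a
    set x : Q := h₂.symm (a, z0) with hx
    set y : P := ⟨↑x, mP a⟩ with hy
    have hy2 : ((h₁ y).2 : ℝ) = 0 := (mem₁ y).2 x.2
    have hxy : h₁ y = (g a, z0) := by
      apply Prod.ext
      · rfl
      · exact Subtype.ext hy2
    have hsymm : h₁.symm (g a, z0) = y := by rw [← hxy, h₁.symm_apply_apply]
    have : g' (g a) = (h₂ ⟨↑(h₁.symm (g a, z0)), mQ (g a)⟩).1 := rfl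
    rw [this]
    have hcoe : (⟨↑(h₁.symm (g a, z0)), mQ (g a)⟩ : Q) = x := by
      apply Subtype.ext
      have hval := congrArg Subtype.val hsymm
      exact hval
    rw [hcoe, hx, h₂.apply_symm_apply]
  have hgg' : ∀ a : E, g (g' a) = a := by
    intro a
    set x : P := h₁.symm (a, z0) with hx
    set y : Q := ⟨↑x, mQ a⟩ with hy
    have hy2 : ((h₂ y).2 : ℝ) = 0 := (mem₂ y).2 x.2
    have hxy : h₂ y = (g' a, z0) := by
      apply Prod.ext
      · rfl
      · exact Subtype.ext hy2
    have hsymm : h₂.symm (g' a, z0) = y := by rw [← hxy, h₂.symm_apply_apply]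
    have : g (g' a) = (h₁ ⟨↑(h₂.symm (g' a, z0)), mP (g' a)⟩).1 := rfl
    rw [this]
    have hcoe : (⟨↑(h₂.symm (g' a, z0)), mP (g' a)⟩ : P) = x := by
      apply Subtype.ext
      have hval := congrArg Subtype.val hsymm
      exact hval
    rw [hcoe, hx, h₁.apply_symm_apply]
  -- the two pieces of the forward map
  set F₁ : P → E × ℝ := fun x => ((h₁ x).1, -((h₁ x).2 : ℝ)) with hF₁
  set F₂ : Q → E × ℝ := fun x => (g ((h₂ x).1), ((h₂ x).2 : ℝ)) with hF₂
  have hF₁c : Continuous F₁ :=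
    (continuous_fst.comp h₁.continuous).prodMk
      ((continuous_subtype_val.comp (continuous_snd.comp h₁.continuous)).neg)
  have hF₂c : Continuous F₂ :=
    (hgc.comp (continuous_fst.comp h₂.continuous)).prodMk
      (continuous_subtype_val.comp (continuous_snd.comp h₂.continuous))
  -- compatibility on the overlap
  have compat : ∀ (x : M) (hp : x ∈ P) (hq : x ∈ Q), F₁ ⟨x, hp⟩ = F₂ ⟨x, hq⟩ := by
    intro x hp hq
    have h1z : ((h₁ ⟨x, hp⟩).2 : ℝ) = 0 := (mem₁ _).2 hq
    have h2z : ((h₂ ⟨x, hq⟩).2 : ℝ) = 0 := (mem₂ _).2 hp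
    have key : g ((h₂ ⟨x, hq⟩).1) = (h₁ ⟨x, hp⟩).1 := by
      set a := (h₂ ⟨x, hq⟩).1 with ha
      have h2x : h₂ ⟨x, hq⟩ = (a, z0) := by
        apply Prod.ext
        · rfl
        · exact Subtype.ext h2z
      have hsymm : h₂.symm (a, z0) = ⟨x, hq⟩ := by rw [← h2x, h₂.symm_apply_apply]
      have : g a = (h₁ ⟨↑(h₂.symm (a, z0)), mP a⟩).1 := rfl
      rw [this]
      have hc2 : (⟨↑(h₂.symm (a, z0)), mP a⟩ : P) = ⟨x, hp⟩ := by
        apply Subtype.ext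
        have hval := congrArg Subtype.val hsymm
        exact hval
      rw [hc2]
    apply Prod.ext
    · exact key.symm
    · show -((h₁ ⟨x, hp⟩).2 : ℝ) = ((h₂ ⟨x, hq⟩).2 : ℝ)
      rw [h1z, h2z, neg_zero]
  -- forward map
  set T : M → E × ℝ := fun x => if hx : x ∈ P then F₁ ⟨x, hx⟩ else F₂ ⟨x, memQ x hx⟩ with hT
  have hTP : ∀ (x : M) (hx : x ∈ P), T x = F₁ ⟨x, hx⟩ := by
    intro x hx; rw [hT]; simp only [dif_pos hx]
  have hTQ : ∀ (x : M) (hx : x ∈ Q), T x = F₂ ⟨x, hx⟩ := by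
    intro x hx
    by_cases hp : x ∈ P
    · rw [hTP x hp]; exact compat x hp hx
    · rw [hT]; simp only [dif_neg hp]
  have hTc : Continuous T := by
    apply continuous_of_closedCover hP hQ hPQ
    · rw [continuousOn_iff_continuous_restrict]
      have : P.domRestrict T = F₁ := by
        funext x
        exact (hTP ↑x x.2).trans (congrArg F₁ (Subtype.ext rfl))
      rw [this]; exact hF₁c
    · rw [continuousOn_iff_continuous_restrict]
      have : Q.domRestrict T = F₂ := by
        funext x
        exact (hTQ ↑x x.2).trans (congrArg F₂ (Subtype.ext rfl))
      rw [this]; exact hF₂c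
  -- inverse map
  set proj : ℝ → Set.Ici (0 : ℝ) := fun t => ⟨max t 0, le_max_right t 0⟩ with hproj
  have hprojc : Continuous proj := Continuous.subtype_mk (continuous_id.max continuous_const) _
  have hproj_of_nonneg : ∀ (t : ℝ) (ht : 0 ≤ t), proj t = ⟨t, ht⟩ := by
    intro t ht; exact Subtype.ext (max_eq_left ht)
  set G₁ : E × ℝ → M := fun p => ↑(h₁.symm (p.1, proj (-p.2))) with hG₁
  set G₂ : E × ℝ → M := fun p => ↑(h₂.symm (g' p.1, proj p.2)) with hG₂
  have hG₁c : Continuous G₁ :=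
    continuous_subtype_val.comp (h₁.symm.continuous.comp
      (continuous_fst.prodMk (hprojc.comp continuous_snd.neg)))
  have hG₂c : Continuous G₂ :=
    continuous_subtype_val.comp (h₂.symm.continuous.comp
      ((hg'c.comp continuous_fst).prodMk (hprojc.comp continuous_snd)))
  set S : E × ℝ → M := fun p => if p.2 ≤ (0 : ℝ) then G₁ p else G₂ p with hS
  have hbdry : ∀ p : E × ℝ, p.2 = 0 → G₁ p = G₂ p := by
    intro p hp
    have hz : proj (-p.2) = z0 := by rw [hp]; apply Subtype.ext; simp [hproj, hz0]
    have hz' : proj p.2 = z0 := by rw [hp]; apply Subtype.ext; exact max_self 0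
    rw [hG₁, hG₂]
    simp only [hz, hz']
    set y : Q := ⟨↑(h₁.symm (p.1, z0)), mQ p.1⟩ with hy
    have hy2 : ((h₂ y).2 : ℝ) = 0 := (mem₂ y).2 (h₁.symm (p.1, z0)).2
    have hxy : h₂ y = (g' p.1, z0) := by
      apply Prod.ext
      · rfl
      · exact Subtype.ext hy2
    have : h₂.symm (g' p.1, z0) = y := by rw [← hxy, h₂.symm_apply_apply]
    rw [this]
  have hSc : Continuous S := by
    rw [hS]
    exact Continuous.if_le hG₁c hG₂c continuous_snd continuous_const
      (fun p hp => hbdry p hp)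
  -- left inverse
  have hleft : ∀ x : M, S (T x) = x := by
    intro x
    by_cases hx : x ∈ P
    · set X : P := ⟨x, hx⟩ with hX
      have hle : -((h₁ X).2 : ℝ) ≤ 0 := neg_nonpos.2 (h₁ X).2.2
      have e1 : T x = ((h₁ X).1, -((h₁ X).2 : ℝ)) := hTP x hx
      have e2 : S ((h₁ X).1, -((h₁ X).2 : ℝ)) = G₁ ((h₁ X).1, -((h₁ X).2 : ℝ)) := if_pos hle
      have e3 : proj (-(-((h₁ X).2 : ℝ))) = (h₁ X).2 :=
        Subtype.ext (by rw [neg_neg]; exact max_eq_left (h₁ X).2.2)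
      have e4 : G₁ ((h₁ X).1, -((h₁ X).2 : ℝ)) = ↑(h₁.symm ((h₁ X).1, (h₁ X).2)) := by
        show (↑(h₁.symm ((h₁ X).1, proj (-(-((h₁ X).2 : ℝ))))) : M) = _
        rw [e3]
      rw [e1, e2, e4]
      show (↑(h₁.symm (h₁ X)) : M) = x
      rw [h₁.symm_apply_apply]
    · have hq := memQ x hx
      set X : Q := ⟨x, hq⟩ with hX
      have e1 : T x = (g ((h₂ X).1), ((h₂ X).2 : ℝ)) := hTQ x hq
      have htne : (((h₂ X).2 : ℝ)) ≠ 0 := fun h => hx ((mem₂ X).1 h)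
      have hnle : ¬ (((h₂ X).2 : ℝ) ≤ 0) := not_le.2 (lt_of_le_of_ne (h₂ X).2.2 (Ne.symm htne))
      have e2 : S (g ((h₂ X).1), ((h₂ X).2 : ℝ)) = G₂ (g ((h₂ X).1), ((h₂ X).2 : ℝ)) :=
        if_neg hnle
      have e3 : proj ((h₂ X).2 : ℝ) = (h₂ X).2 := Subtype.ext (max_eq_left (h₂ X).2.2)
      have e4 : G₂ (g ((h₂ X).1), ((h₂ X).2 : ℝ)) = ↑(h₂.symm ((h₂ X).1, (h₂ X).2)) := by
        show (↑(h₂.symm (g' (g ((h₂ X).1)), proj ((h₂ X).2 : ℝ))) : M) = _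
        rw [e3, hg'g]
      rw [e1, e2, e4]
      show (↑(h₂.symm (h₂ X)) : M) = x
      rw [h₂.symm_apply_apply]
  -- right inverse
  have hright : ∀ p : E × ℝ, T (S p) = p := by
    intro p
    by_cases ht : p.2 ≤ 0
    · have e0 : S p = G₁ p := if_pos ht
      set Y : P := h₁.symm (p.1, proj (-p.2)) with hYdef
      have e1 : T ↑Y = ((h₁ Y).1, -((h₁ Y).2 : ℝ)) := hTP ↑Y Y.2
      rw [e0]
      show T ↑Y = p
      rw [e1]
      have e2 : h₁ Y = (p.1, proj (-p.2)) := h₁.apply_symm_apply _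
      rw [e2]
      show (p.1, -max (-p.2) 0) = p
      rw [max_eq_left (neg_nonneg.2 ht), neg_neg]
    · push_neg at ht
      have e0 : S p = G₂ p := if_neg (not_le.2 ht)
      set Y : Q := h₂.symm (g' p.1, proj p.2) with hYdef
      have e3 : h₂ Y = (g' p.1, proj p.2) := h₂.apply_symm_apply _
      have hYp : (↑Y : M) ∉ P := by
        intro hp'
        have h0 : ((h₂ Y).2 : ℝ) = 0 := (mem₂ Y).2 hp'
        rw [e3] at h0
        have h0' : max p.2 0 = 0 := h0
        rw [max_eq_left ht.le] at h0'
        exact (ne_of_gt ht) h0'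
      rw [e0]
      show T ↑Y = p
      have e1 : T ↑Y = (g ((h₂ Y).1), ((h₂ Y).2 : ℝ)) := by
        show (if hx : (↑Y : M) ∈ P then F₁ ⟨↑Y, hx⟩ else F₂ ⟨↑Y, memQ ↑Y hx⟩) = _
        rw [dif_neg hYp]
      rw [e1, e3]
      show (g (g' p.1), max p.2 0) = p
      rw [hgg', max_eq_left ht.le]
  -- assemble the homeomorphism M ≃ₜ E × ℝ
  set hom : M ≃ₜ E × ℝ :=
    { toFun := T
      invFun := S
      left_inv := hleft
      right_inv := hright
      continuous_toFun := hTc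
      continuous_invFun := hSc } with hhom
  -- E × ℝ ≃ₜ ℝⁿ
  have hfr : Module.finrank ℝ (E × ℝ) = Module.finrank ℝ (EuclideanSpace ℝ (Fin n)) := by
    have e1 : Module.finrank ℝ E = n - 1 := finrank_euclideanSpace_fin
    have e2 : Module.finrank ℝ (E × ℝ) = Module.finrank ℝ E + Module.finrank ℝ ℝ :=
      Module.finrank_prod
    rw [e2, e1, finrank_euclideanSpace_fin, Module.finrank_self]
    omega
  exact ⟨hom.trans (ContinuousLinearEquiv.ofFinrankEq hfr).toHomeomorph⟩
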